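/- For m ≥ 2, the magnitude chain complex of the directed cycle Z_m decomposes: for each vertex x and length ℓ, the subcomplex MC_*(x,ℓ) spanned by tuples starting at x of length ℓ is isomorphic, as a chain complex, to OP_*(ℓ,m) via (x, x₁, ..., x_k) ↦ (d(x,x₁), d(x₁,x₂), ..., d(x_{k-1},x_k)). -/

import Mathlib

open scoped Classical

/-- A directed graph on a vertex type `V` (loops allowed, no parallel edges). -/
structure DGraph (V : Type) where
  Adj : V → V → Prop

namespace DGraph
variable {V : Type}

/-- There is a directed path of length `n` (i.e. with `n` edges) from `x` to `y`. -/
def PathLen (G : DGraph V) (x y : V) (n : ℕ) : Prop :=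
  ∃ f : ℕ → V, f 0 = x ∧ f n = y ∧ ∀ i < n, G.Adj (f i) (f (i + 1))

/-- The shortest path metric, with values in `ℕ∞ = ℕ ∪ {∞}`. -/
noncomputable def edist (G : DGraph V) (x y : V) : ℕ∞ :=
  sInf {n : ℕ∞ | ∃ m : ℕ, n = m ∧ G.PathLen x y m}

/-- The length of a tuple of vertices: the sum of consecutive distances. -/
noncomputable def tlen (G : DGraph V) {k : ℕ} (f : Fin (k + 1) → V) : ℕ∞ :=
  ∑ i : Fin k, G.edist (f i.castSucc) (f i.succ)

/-- `y` is reachable from `x` by a directed path. -/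
def Reaches (G : DGraph V) (x y : V) : Prop := Relation.ReflTransGen G.Adj x y

/-- The induced subgraph on a set of vertices. -/
def induce (G : DGraph V) (A : Set V) : DGraph A := ⟨fun a b => G.Adj a.1 b.1⟩

end DGraph

variable {V : Type}

/-- Validity of a tuple as a magnitude-chain basis element of degree `k` and length `ℓ`:
consecutive entries are distinct, at finite distance, and the total length is `ℓ`. -/
def MCValid (G : DGraph V) (k ℓ : ℕ) (f : Fin (k + 1) → V) : Prop :=
  (∀ i : Fin k, G.edist (f i.castSucc) (f i.succ) ≠ 0 ∧ G.edist (f i.castSucc) (f i.succ) ≠ ⊤) ∧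
    G.tlen f = (ℓ : ℕ∞)

/-- Basis of the magnitude chain group `MC_{k,ℓ}(G)`. -/
def MCb (G : DGraph V) (k ℓ : ℕ) : Type := {f : Fin (k + 1) → V // MCValid G k ℓ f}

/-- The magnitude chain group `MC_{k,ℓ}(G)` with coefficients in `R`. -/
abbrev MCMod (R : Type) [CommRing R] (G : DGraph V) (k ℓ : ℕ) := MCb G k ℓ →₀ R

/-- Deletion of the interior entry in position `j+1` of a `(k+2)`-tuple. -/
def delMid {k : ℕ} (f : Fin (k + 2) → V) (j : Fin k) : Fin (k + 1) → V :=
  f ∘ (Fin.succAbove j.succ.castSucc)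

/-- The magnitude-chain differential `MC_{k+1,ℓ}(G) → MC_{k,ℓ}(G)`: delete interior
entries with alternating signs, omitting any length-decreasing term. -/
noncomputable def dMC (R : Type) [CommRing R] (G : DGraph V) (k ℓ : ℕ) :
    MCMod R G (k + 1) ℓ →ₗ[R] MCMod R G k ℓ :=
  Finsupp.lsum R fun b => LinearMap.toSpanSingleton R _
    (∑ j : Fin k, (-1 : R) ^ ((j : ℕ) + 1) •
      (if h : MCValid G k ℓ (delMid b.1 j) then
        Finsupp.single (⟨delMid b.1 j, h⟩ : MCb G k ℓ) (1 : R) else 0))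

/-- The outgoing magnitude differential from degree `k` (zero in degree `0`). -/
noncomputable def dMCOut (R : Type) [CommRing R] (G : DGraph V) (ℓ : ℕ) :
    (k : ℕ) → MCMod R G k ℓ →ₗ[R] MCMod R G (k - 1) ℓ
  | 0 => 0
  | (k + 1) => dMC R G k ℓ

/-- Magnitude homology `MH_{k,ℓ}(G)` with coefficients in `R`. -/
noncomputable abbrev MH (R : Type) [CommRing R] (G : DGraph V) (k ℓ : ℕ) :=
  letI : HasQuotient (LinearMap.ker (dMCOut R G ℓ k))
      (Submodule R (LinearMap.ker (dMCOut R G ℓ k))) :=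
      Submodule.hasQuotient (R := R) (M := LinearMap.ker (dMCOut R G ℓ k))
  LinearMap.ker (dMCOut R G ℓ k) ⧸
    (LinearMap.range (dMCOut R G ℓ (k + 1))).comap (LinearMap.ker (dMCOut R G ℓ k)).subtype

/-- Embedding of the magnitude chains into the free module on all tuples of vertices. -/
noncomputable def eMC (R : Type) [CommRing R] (G : DGraph V) (k ℓ : ℕ) :
    MCMod R G k ℓ →ₗ[R] ((Fin (k + 1) → V) →₀ R) :=
  Finsupp.lmapDomain R R Subtype.val

/-- Basis of a subcomplex of the magnitude chains, cut out by a predicate `P` on tuples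
(assumed closed under the interior deletions appearing in the differential). -/
def RCb (G : DGraph V) (P : ∀ k, (Fin (k + 1) → V) → Prop) (k ℓ : ℕ) : Type :=
  {f : Fin (k + 1) → V // MCValid G k ℓ f ∧ P k f}

/-- The degree-`k`, length-`ℓ` chain group of the subcomplex cut out by `P`. -/
abbrev RMod (R : Type) [CommRing R] (G : DGraph V) (P : ∀ k, (Fin (k + 1) → V) → Prop)
    (k ℓ : ℕ) := RCb G P k ℓ →₀ R

/-- The differential of the subcomplex cut out by `P`. -/
noncomputable def dR (R : Type) [CommRing R] (G : DGraph V)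
    (P : ∀ k, (Fin (k + 1) → V) → Prop) (k ℓ : ℕ) :
    RMod R G P (k + 1) ℓ →ₗ[R] RMod R G P k ℓ :=
  Finsupp.lsum R fun b => LinearMap.toSpanSingleton R _
    (∑ j : Fin k, (-1 : R) ^ ((j : ℕ) + 1) •
      (if h : MCValid G k ℓ (delMid b.1 j) ∧ P k (delMid b.1 j) then
        Finsupp.single (⟨delMid b.1 j, h⟩ : RCb G P k ℓ) (1 : R) else 0))

/-- The outgoing differential of the subcomplex from degree `k` (zero in degree `0`). -/
noncomputable def dROut (R : Type) [CommRing R] (G : DGraph V)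
    (P : ∀ k, (Fin (k + 1) → V) → Prop) (ℓ : ℕ) :
    (k : ℕ) → RMod R G P k ℓ →ₗ[R] RMod R G P (k - 1) ℓ
  | 0 => 0
  | (k + 1) => dR R G P k ℓ

/-- The degree-`k`, length-`ℓ` homology of the subcomplex cut out by `P`. -/
noncomputable abbrev RH (R : Type) [CommRing R] (G : DGraph V)
    (P : ∀ k, (Fin (k + 1) → V) → Prop) (k ℓ : ℕ) :=
  letI : HasQuotient (LinearMap.ker (dROut R G P ℓ k))
      (Submodule R (LinearMap.ker (dROut R G P ℓ k))) :=
      Submodule.hasQuotient (R := R) (M := LinearMap.ker (dROut R G P ℓ k))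
  LinearMap.ker (dROut R G P ℓ k) ⧸
    (LinearMap.range (dROut R G P ℓ (k + 1))).comap (LinearMap.ker (dROut R G P ℓ k)).subtype

/-- Embedding of the subcomplex chains into the free module on all tuples of vertices. -/
noncomputable def eR (R : Type) [CommRing R] (G : DGraph V)
    (P : ∀ k, (Fin (k + 1) → V) → Prop) (k ℓ : ℕ) :
    RMod R G P k ℓ →ₗ[R] ((Fin (k + 1) → V) →₀ R) :=
  Finsupp.lmapDomain R R Subtype.val

/-- `A ⊆ V`, with projection `π`, is a cofibration in `G`: an induced subgraph inclusion
with no edges from outside `A` into `A`, such that every vertex `x` in the reach of `A`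
has a projection `π x ∈ A` with `d(a,x) = d(a,π x) + d(π x,x)` for all `a ∈ A`. -/
def IsCofib (G : DGraph V) (A : Set V) (π : V → V) : Prop :=
  (∀ u v : V, u ∉ A → v ∈ A → ¬ G.Adj u v) ∧
  (∀ x : V, (∃ a ∈ A, G.Reaches a x) →
    π x ∈ A ∧ ∀ a ∈ A, G.edist a x = G.edist a (π x) + G.edist (π x) x)

/-- The predicate cutting out the subcomplex `A_{*,ℓ}(a,x)` of `MC_{*,ℓ}(X)`: tuples
starting at `a`, ending at `x`, with all intermediate entries in `A`. -/
def AP (A : Set V) (a x : V) : ∀ k, (Fin (k + 1) → V) → Prop :=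
  fun k f => f 0 = a ∧ f (Fin.last k) = x ∧
    ∀ i : Fin (k + 1), i ≠ 0 → i ≠ Fin.last k → f i ∈ A

/-- Basis of `OP_k(ℓ,m)`: ordered partitions of `ℓ` into `k` parts, all in `{1,...,m-1}`. -/
def OPb (ℓ : ℤ) (m k : ℕ) : Type :=
  {l : List ℕ // l.length = k ∧ (l.sum : ℤ) = ℓ ∧ ∀ x ∈ l, 1 ≤ x ∧ x < m}

/-- The degree-`k` chain module of the complex of ordered partitions with upper bound. -/
abbrev OPMod (R : Type) [CommRing R] (ℓ : ℤ) (m k : ℕ) := OPb ℓ m k →₀ R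

/-- The alternating sum of adjacent merges of a list, dropping merged entries `≥ m`. -/
noncomputable def dList (R : Type) [CommRing R] (m : ℕ) : List ℕ → (List ℕ →₀ R)
  | [] => 0
  | [_] => 0
  | a :: b :: t =>
      (if a + b < m then -Finsupp.single ((a + b) :: t) (1 : R) else 0)
        - Finsupp.mapDomain (List.cons a) (dList R m (b :: t))

/-- Embedding of `OP_k(ℓ,m)` into the free module on all lists. -/
noncomputable def eL (R : Type) [CommRing R] (ℓ : ℤ) (m k : ℕ) :
    OPMod R ℓ m k →ₗ[R] (List ℕ →₀ R) :=
  Finsupp.lmapDomain R R Subtype.val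

noncomputable def DL (R : Type) [CommRing R] (m : ℕ) : (List ℕ →₀ R) →ₗ[R] (List ℕ →₀ R) :=
  Finsupp.lsum R fun l => LinearMap.toSpanSingleton R _ (dList R m l)

noncomputable def rL (R : Type) [CommRing R] (ℓ : ℤ) (m k : ℕ) :
    (List ℕ →₀ R) →ₗ[R] OPMod R ℓ m k :=
  Finsupp.lcomapDomain Subtype.val Subtype.val_injective

/-- The differential of the complex `OP_*(ℓ,m)`: merge adjacent entries with alternating
signs `(-1)^i`, dropping any term in which the merged entry is `≥ m`. -/
noncomputable def dOP (R : Type) [CommRing R] (ℓ : ℤ) (m k : ℕ) :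
    OPMod R ℓ m (k + 1) →ₗ[R] OPMod R ℓ m k :=
  (rL R ℓ m k) ∘ₗ (DL R m) ∘ₗ (eL R ℓ m (k + 1))

/-- The outgoing differential from degree `k` (zero in degree `0`). -/
noncomputable def dOPOut (R : Type) [CommRing R] (ℓ : ℤ) (m : ℕ) :
    (k : ℕ) → OPMod R ℓ m k →ₗ[R] OPMod R ℓ m (k - 1)
  | 0 => 0
  | (k + 1) => dOP R ℓ m k

/-- Homology of the complex `OP_*(ℓ,m)` in degree `k`. -/
noncomputable abbrev OPH (R : Type) [CommRing R] (ℓ : ℤ) (m k : ℕ) :=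
  letI : HasQuotient (LinearMap.ker (dOPOut R ℓ m k))
      (Submodule R (LinearMap.ker (dOPOut R ℓ m k))) :=
      Submodule.hasQuotient (R := R) (M := LinearMap.ker (dOPOut R ℓ m k))
  LinearMap.ker (dOPOut R ℓ m k) ⧸
    (LinearMap.range (dOPOut R ℓ m (k + 1))).comap (LinearMap.ker (dOPOut R ℓ m k)).subtype

/-- The chain map `φ : OP_{*-2}(ℓ-m,m) → OP_*(ℓ,m)`, prepending `(1, m-1)`. -/
noncomputable def phiOP (R : Type) [CommRing R] (ℓ : ℤ) (m : ℕ) (hm : 2 ≤ m) (k : ℕ) :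
    OPMod R (ℓ - m) m k →ₗ[R] OPMod R ℓ m (k + 2) :=
  Finsupp.lmapDomain R R fun b =>
    ⟨1 :: (m - 1) :: b.1, by
      obtain ⟨h1, h2, h3⟩ := b.2
      refine ⟨by simpa using h1, ?_, ?_⟩
      · simp only [List.sum_cons]
        omega
      · intro y hy
        simp only [List.mem_cons] at hy
        rcases hy with rfl | rfl | hy
        · omega
        · omega
        · exact h3 y hy⟩

/-- The alternating list `(1, m-1, 1, m-1, ...)` with `2i` entries. -/
def altL (m : ℕ) : ℕ → List ℕ
  | 0 => []
  | i + 1 => 1 :: (m - 1) :: altL m i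

/-- The alternating list `(m-1, 1, m-1, 1, ...)` with `2i` entries. -/
def altL' (m : ℕ) : ℕ → List ℕ
  | 0 => []
  | i + 1 => (m - 1) :: 1 :: altL' m i

/-- The directed cycle `Z_m` on the vertex set `ZMod m`, with edges `x → x + 1`. -/
def Zc (m : ℕ) : DGraph (ZMod m) := ⟨fun x y => y = x + 1⟩

section Aux
variable {m : ℕ}

lemma Zc_pathLen_iff (x y : ZMod m) (n : ℕ) : (Zc m).PathLen x y n ↔ y = x + n := by
  constructor
  · rintro ⟨f, h0, hn, hadj⟩
    have key : ∀ i ≤ n, f i = x + i := by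
      intro i hi
      induction i with
      | zero => simpa using h0
      | succ j ih =>
        have hj := hadj j (by omega)
        simp only [Zc] at hj
        rw [hj, ih (by omega)]
        push_cast
        ring
    rw [← hn, key n le_rfl]
  · rintro rfl
    exact ⟨fun i => x + i, by simp, rfl, fun i _ => by simp [Zc]; push_cast; ring⟩

lemma Zc_edist_eq [NeZero m] (x y : ZMod m) :
    (Zc m).edist x y = ((y - x).val : ℕ∞) := by
  unfold DGraph.edist
  apply le_antisymm
  · apply sInf_le
    refine ⟨(y - x).val, rfl, ?_⟩
    rw [Zc_pathLen_iff]
    simp [ZMod.natCast_val, ZMod.cast_id]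
  · apply le_sInf
    rintro b ⟨n, rfl, hp⟩
    rw [Zc_pathLen_iff] at hp
    have : ((n : ZMod m)) = y - x := by rw [hp]; ring
    have hv : (y - x).val = n % m := by rw [← this, ZMod.val_natCast]
    have : (y - x).val ≤ n := by rw [hv]; exact Nat.mod_le n m
    exact_mod_cast this

end Aux
/-- Vertex tuple from a starting vertex and a list of increments. -/
def vtx (m : ℕ) (x : ZMod m) (L : List ℕ) (k : ℕ) : Fin (k + 1) → ZMod m :=
  fun i => x + ((L.take i).sum : ℕ)

/-- Merge entries `j` and `j+1` of a list. -/
def mergeAt (j : ℕ) (L : List ℕ) : List ℕ :=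
  L.take j ++ (L.getD j 0 + L.getD (j + 1) 0) :: L.drop (j + 2)

lemma mergeAt_zero (a b : ℕ) (t : List ℕ) : mergeAt 0 (a :: b :: t) = (a + b) :: t := by
  simp [mergeAt]

lemma mergeAt_succ (j : ℕ) (a : ℕ) (t : List ℕ) :
    mergeAt (j + 1) (a :: t) = a :: mergeAt j t := by
  simp [mergeAt, List.take_succ_cons, List.drop_succ_cons]

lemma mergeAt_length (j : ℕ) (L : List ℕ) (h : j + 1 < L.length) :
    (mergeAt j L).length = L.length - 1 := by
  simp [mergeAt]
  omega

section Aux2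
variable {m : ℕ} [NeZero m]

lemma vtx_succ (x : ZMod m) (L : List ℕ) (k : ℕ) (i : Fin k) (hL : L.length = k) :
    vtx m x L k i.succ = vtx m x L k i.castSucc + (L.getD i 0 : ℕ) := by
  have hi : (i : ℕ) < L.length := by omega
  have hsum : (L.take ((i : ℕ) + 1)).sum = (L.take i).sum + L.getD i 0 := by
    rw [← List.take_concat_get' L _ hi, List.sum_append, List.getD_eq_getElem _ _ hi,
      List.sum_singleton]
  simp only [vtx, Fin.coe_castSucc, Fin.val_succ, hsum, Nat.cast_add]
  ring

lemma edist_vtx (x : ZMod m) (L : List ℕ) (k : ℕ) (i : Fin k) (hL : L.length = k) :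
    (Zc m).edist (vtx m x L k i.castSucc) (vtx m x L k i.succ)
      = ((L.getD i 0 % m : ℕ) : ℕ∞) := by
  rw [Zc_edist_eq, vtx_succ x L k i hL]
  congr 1
  rw [add_sub_cancel_left, ZMod.val_natCast]

lemma mcvalid_vtx (x : ZMod m) (L : List ℕ) (k ℓ : ℕ) (hL : L.length = k) :
    MCValid (Zc m) k ℓ (vtx m x L k) ↔
      (∀ i : Fin k, L.getD i 0 % m ≠ 0) ∧ (∑ i : Fin k, L.getD i 0 % m) = ℓ := by
  unfold MCValid DGraph.tlen
  constructor
  · rintro ⟨h1, h2⟩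
    constructor
    · intro i
      have := (h1 i).1
      rw [edist_vtx x L k i hL] at this
      exact_mod_cast this
    · have : (∑ i : Fin k, (Zc m).edist (vtx m x L k i.castSucc) (vtx m x L k i.succ))
          = ((∑ i : Fin k, L.getD i 0 % m : ℕ) : ℕ∞) := by
        push_cast
        exact Finset.sum_congr rfl fun i _ => edist_vtx x L k i hL
      rw [this] at h2
      exact_mod_cast h2
  · rintro ⟨h1, h2⟩
    constructor
    · intro i
      rw [edist_vtx x L k i hL]
      constructor
      · exact_mod_cast h1 i
      · exact ENat.coe_ne_top _
    · rw [show (∑ i : Fin k, (Zc m).edist (vtx m x L k i.castSucc) (vtx m x L k i.succ))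
          = ((∑ i : Fin k, L.getD i 0 % m : ℕ) : ℕ∞) by
        push_cast; exact Finset.sum_congr rfl fun i _ => edist_vtx x L k i hL]
      exact_mod_cast h2

end Aux2
/-- The list of consecutive differences of a tuple in `ZMod m`. -/
def toListF {m k : ℕ} (f : Fin (k + 1) → ZMod m) : List ℕ :=
  List.ofFn fun i : Fin k => (f i.succ - f i.castSucc).val

lemma fin_sum_getD (L : List ℕ) (g : ℕ → ℕ) :
    ∑ i : Fin L.length, g (L.getD i 0) = (L.map g).sum := by
  induction L with
  | nil => simp
  | cons a t ih =>
    rw [List.length_cons, Fin.sum_univ_succ]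
    simpa using congrArg (g a + ·) ih

lemma fin_forall_getD (L : List ℕ) (P : ℕ → Prop) :
    (∀ i : Fin L.length, P (L.getD i 0)) ↔ ∀ e ∈ L, P e := by
  constructor
  · intro h e he
    obtain ⟨i, hi, rfl⟩ := List.mem_iff_getElem.mp he
    have := h ⟨i, hi⟩
    rwa [List.getD_eq_getElem _ _ hi] at this
  · intro h i
    rw [List.getD_eq_getElem _ _ i.2]
    exact h _ (List.getElem_mem _)

section Aux3
variable {m : ℕ} [NeZero m]

lemma toListF_length {k : ℕ} (f : Fin (k + 1) → ZMod m) : (toListF f).length = k := by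
  simp [toListF]

lemma toListF_getD {k : ℕ} (f : Fin (k + 1) → ZMod m) (i : Fin k) :
    (toListF f).getD i 0 = (f i.succ - f i.castSucc).val := by
  have hi : (i : ℕ) < (toListF f).length := by rw [toListF_length]; exact i.2
  rw [List.getD_eq_getElem _ _ hi]
  simp [toListF]

lemma vtx_toListF {k : ℕ} (f : Fin (k + 1) → ZMod m) : vtx m (f 0) (toListF f) k = f := by
  funext i
  induction i using Fin.induction with
  | zero => simp [vtx]
  | succ i ih =>
    rw [vtx_succ _ _ _ i (toListF_length f), ih, toListF_getD]
    simp [ZMod.natCast_val, ZMod.cast_id]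

lemma toListF_vtx {k : ℕ} (x : ZMod m) (L : List ℕ) (hL : L.length = k)
    (hlt : ∀ e ∈ L, e < m) : toListF (vtx m x L k) = L := by
  apply List.ext_getElem (by rw [toListF_length]; omega)
  intro i h1 h2
  have hik : i < k := by omega
  have : (toListF (vtx m x L k)).getD i 0 = L.getD i 0 := by
    rw [toListF_getD (vtx m x L k) ⟨i, hik⟩]
    have := vtx_succ x L k ⟨i, hik⟩ hL
    rw [show (vtx m x L k (Fin.succ ⟨i, hik⟩)) - vtx m x L k (Fin.castSucc ⟨i, hik⟩)
        = ((L.getD i 0 : ℕ) : ZMod m) by rw [this]; ring]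
    rw [ZMod.val_natCast, Nat.mod_eq_of_lt]
    exact hlt _ (List.getD_eq_getElem L 0 h2 ▸ List.getElem_mem _)
  rwa [List.getD_eq_getElem _ _ h1, List.getD_eq_getElem _ _ h2] at this

end Aux3
lemma fin_sum_getD' (L : List ℕ) (k : ℕ) (hL : L.length = k) (g : ℕ → ℕ) :
    ∑ i : Fin k, g (L.getD i 0) = (L.map g).sum := by
  subst hL; exact fin_sum_getD L g

lemma fin_forall_getD' (L : List ℕ) (k : ℕ) (hL : L.length = k) (P : ℕ → Prop) :
    (∀ i : Fin k, P (L.getD i 0)) ↔ ∀ e ∈ L, P e := by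
  subst hL; exact fin_forall_getD L P

section Aux4
variable {m : ℕ} [NeZero m]

lemma tlen_toListF {k ℓ : ℕ} (f : Fin (k + 1) → ZMod m)
    (h : (Zc m).tlen f = (ℓ : ℕ∞)) : (toListF f).sum = ℓ := by
  have : (Zc m).tlen f = (((toListF f).sum : ℕ) : ℕ∞) := by
    unfold DGraph.tlen toListF
    rw [List.sum_ofFn]
    push_cast
    exact Finset.sum_congr rfl fun i _ => by rw [Zc_edist_eq]
  rw [this] at h
  exact_mod_cast h

lemma mem_toListF {k : ℕ} {f : Fin (k + 1) → ZMod m} {y : ℕ} (hy : y ∈ toListF f) :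
    ∃ i : Fin k, y = (f i.succ - f i.castSucc).val := by
  obtain ⟨i, hi⟩ := List.mem_ofFn.mp hy
  exact ⟨i, hi.symm⟩

/-- The bijection between magnitude-chain tuples starting at `x` and ordered partitions. -/
noncomputable def eqvZ (m : ℕ) [NeZero m] (x : ZMod m) (ℓ k : ℕ) :
    RCb (Zc m) (fun _ f => f 0 = x) k ℓ ≃ OPb (ℓ : ℤ) m k where
  toFun b := ⟨toListF b.1, toListF_length b.1, by
      exact_mod_cast tlen_toListF b.1 b.2.1.2, by
      intro y hy
      obtain ⟨i, rfl⟩ := mem_toListF hy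
      refine ⟨?_, ZMod.val_lt _⟩
      have h0 := (b.2.1.1 i).1
      rw [Zc_edist_eq] at h0
      have hne : (b.1 i.succ - b.1 i.castSucc).val ≠ 0 := by exact_mod_cast h0
      omega⟩
  invFun l := ⟨vtx m x l.1 k, by
      obtain ⟨hlen, hsum, hmem⟩ := l.2
      refine ⟨(mcvalid_vtx x l.1 k ℓ hlen).mpr ⟨?_, ?_⟩, by simp [vtx]⟩
      · exact (fin_forall_getD' l.1 k hlen (fun e => e % m ≠ 0)).mpr
          (fun e he => by have h := hmem e he; rw [Nat.mod_eq_of_lt h.2]; omega)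
      · refine Eq.trans (fin_sum_getD' l.1 k hlen (· % m)) ?_
        have h1 : l.1.map (· % m) = l.1 := by
          rw [List.map_congr_left (fun e he => Nat.mod_eq_of_lt (hmem e he).2)]
          exact List.map_id l.1
        rw [h1]
        exact_mod_cast hsum⟩
  left_inv b := by
    apply Subtype.ext
    have h0 : b.1 0 = x := b.2.2
    have h1 : vtx m (b.1 0) (toListF b.1) k = b.1 := vtx_toListF b.1
    rw [h0] at h1
    exact h1
  right_inv l := by
    apply Subtype.ext
    exact toListF_vtx x l.1 l.2.1 fun e he => (l.2.2.2 e he).2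

end Aux4
lemma mergeAt_take_sum : ∀ (j : ℕ) (L : List ℕ), j + 1 < L.length → ∀ n : ℕ,
    ((mergeAt j L).take n).sum = if n ≤ j then (L.take n).sum else (L.take (n + 1)).sum := by
  intro j
  induction j with
  | zero =>
    rintro (_ | ⟨a, _ | ⟨b, t⟩⟩) h n <;> simp at h
    rw [mergeAt_zero]
    match n with
    | 0 => simp
    | n + 1 =>
      simp only [List.take_succ_cons, List.sum_cons]
      rw [if_neg (by omega : ¬ n + 1 ≤ 0)]
      omega
  | succ j ih =>
    rintro (_ | ⟨a, t⟩) h n <;> simp at h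
    rw [mergeAt_succ]
    match n with
    | 0 => simp
    | n + 1 =>
      simp only [List.take_succ_cons, List.sum_cons, ih t (by omega) n, Nat.succ_le_succ_iff]
      split_ifs <;> omega

lemma list_split_sum (L : List ℕ) (j : ℕ) (h : j + 1 < L.length) :
    L.sum = (L.take j).sum + (L.getD j 0 + L.getD (j + 1) 0 + (L.drop (j + 2)).sum) := by
  conv_lhs => rw [← List.take_append_drop j L]
  rw [List.sum_append, List.drop_eq_getElem_cons (show j < L.length by omega),
    List.drop_eq_getElem_cons (show j + 1 < L.length by omega)]
  simp only [List.sum_cons, List.getD_eq_getElem _ _ (show j < L.length by omega),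
    List.getD_eq_getElem _ _ h, show j + 1 + 1 = j + 2 by omega]
  omega

lemma mergeAt_sum (j : ℕ) (L : List ℕ) (h : j + 1 < L.length) :
    (mergeAt j L).sum = (L.take j).sum + (L.getD j 0 + L.getD (j + 1) 0 + (L.drop (j + 2)).sum) := by
  simp [mergeAt, List.sum_append]

lemma mem_mergeAt {j : ℕ} {L : List ℕ} {e : ℕ} (he : e ∈ mergeAt j L) :
    e ∈ L ∨ e = L.getD j 0 + L.getD (j + 1) 0 := by
  simp only [mergeAt, List.mem_append, List.mem_cons] at he
  rcases he with h | h | h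
  · exact Or.inl (List.mem_of_mem_take h)
  · exact Or.inr h
  · exact Or.inl (List.mem_of_mem_drop h)

section Aux5
variable {m : ℕ} [NeZero m]

lemma vtx_val_eq (x : ZMod m) (L : List ℕ) (k k' : ℕ) (i : Fin (k + 1)) (i' : Fin (k' + 1))
    (h : (i : ℕ) = (i' : ℕ)) : vtx m x L k i = vtx m x L k' i' := by
  simp [vtx, h]

lemma delMid_vtx (x : ZMod m) (L : List ℕ) (k : ℕ) (hL : L.length = k + 1) (j : Fin k) :
    delMid (vtx m x L (k + 1)) j = vtx m x (mergeAt j L) k := by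
  funext i
  have hval : ((Fin.succAbove j.succ.castSucc i) : ℕ)
      = if (i : ℕ) < (j : ℕ) + 1 then (i : ℕ) else (i : ℕ) + 1 := by
    rw [Fin.succAbove]
    split_ifs with h1 h2 h3
    · rfl
    · exact absurd (by simpa [Fin.lt_def] using h1) h2
    · exact absurd (by simpa [Fin.lt_def] using h3) h1
    · rfl
  show vtx m x L (k + 1) _ = _
  simp only [vtx, hval, mergeAt_take_sum j L (by omega) i]
  split_ifs with h1 h2 h3 <;> first | rfl | omega
end Aux5
section Aux6
variable {m : ℕ} [NeZero m]

lemma mcvalid_vtx' (x : ZMod m) (L : List ℕ) (k ℓ : ℕ) (hL : L.length = k) :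
    MCValid (Zc m) k ℓ (vtx m x L k) ↔
      (∀ e ∈ L, e % m ≠ 0) ∧ (L.map (· % m)).sum = ℓ := by
  rw [mcvalid_vtx x L k ℓ hL]
  constructor
  · rintro ⟨h1, h2⟩
    exact ⟨(fin_forall_getD' L k hL (fun e => e % m ≠ 0)).mp h1,
      (fin_sum_getD' L k hL (· % m)).symm.trans h2⟩
  · rintro ⟨h1, h2⟩
    exact ⟨(fin_forall_getD' L k hL (fun e => e % m ≠ 0)).mpr h1,
      (fin_sum_getD' L k hL (· % m)).trans h2⟩

lemma mcvalid_mergeAt (x : ZMod m) (L : List ℕ) (k ℓ : ℕ) (hL : L.length = k + 1)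
    (hmem : ∀ e ∈ L, 1 ≤ e ∧ e < m) (hsum : L.sum = ℓ) (j : ℕ) (hj : j < k) :
    MCValid (Zc m) k ℓ (vtx m x (mergeAt j L) k) ↔ L.getD j 0 + L.getD (j + 1) 0 < m := by
  have hm0 : 0 < m := Nat.pos_of_ne_zero (NeZero.ne m)
  have hjl : j + 1 < L.length := by omega
  have hM : (mergeAt j L).length = k := by rw [mergeAt_length _ _ hjl]; omega
  have hT : ∀ e ∈ L.take j, e % m = e ∧ 1 ≤ e := fun e he =>
    ⟨Nat.mod_eq_of_lt (hmem e (List.mem_of_mem_take he)).2, (hmem e (List.mem_of_mem_take he)).1⟩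
  have hD : ∀ e ∈ L.drop (j + 2), e % m = e ∧ 1 ≤ e := fun e he =>
    ⟨Nat.mod_eq_of_lt (hmem e (List.mem_of_mem_drop he)).2, (hmem e (List.mem_of_mem_drop he)).1⟩
  have ha : 1 ≤ L.getD j 0 ∧ L.getD j 0 < m := by
    rw [List.getD_eq_getElem _ _ (show j < L.length by omega)]
    exact hmem _ (List.getElem_mem _)
  have hb : 1 ≤ L.getD (j + 1) 0 ∧ L.getD (j + 1) 0 < m := by
    rw [List.getD_eq_getElem _ _ hjl]
    exact hmem _ (List.getElem_mem _)
  have hsplit := list_split_sum L j hjl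
  have hmapT : (L.take j).map (· % m) = L.take j :=
    ((List.map_congr_left fun e he => (hT e he).1).trans (List.map_id _))
  have hmapD : (L.drop (j + 2)).map (· % m) = L.drop (j + 2) :=
    ((List.map_congr_left fun e he => (hD e he).1).trans (List.map_id _))
  have hmod : (L.getD j 0 + L.getD (j + 1) 0) % m < m := Nat.mod_lt _ hm0
  rw [mcvalid_vtx' x _ k ℓ hM]
  unfold mergeAt
  simp only [List.map_append, List.map_cons, List.sum_append, List.sum_cons, hmapT, hmapD]
  constructor
  · rintro ⟨h1, h2⟩
    have hne := h1 (L.getD j 0 + L.getD (j + 1) 0)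
      (by exact List.mem_append_right _ List.mem_cons_self)
    omega
  · intro h
    have hmm : (L.getD j 0 + L.getD (j + 1) 0) % m = L.getD j 0 + L.getD (j + 1) 0 :=
      Nat.mod_eq_of_lt h
    refine ⟨?_, by omega⟩
    intro e he
    rcases List.mem_append.mp he with h' | h'
    · have := hT e h'
      omega
    · rcases List.mem_cons.mp h' with rfl | h''
      · omega
      · have := hD e h''
        omega

end Aux6
lemma smul_ite_single {α : Type*} {R : Type} [CommRing R] (c : R) (P : Prop) [Decidable P]
    (a : α) (r : R) : c • (if P then Finsupp.single a r else 0)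
      = if P then Finsupp.single a (c * r) else 0 := by
  split_ifs <;> simp [Finsupp.smul_single]

lemma dList_eq (R : Type) [CommRing R] (m : ℕ) : ∀ L : List ℕ,
    dList R m L = ∑ j ∈ Finset.range (L.length - 1), (-1 : R) ^ (j + 1) •
      (if L.getD j 0 + L.getD (j + 1) 0 < m then Finsupp.single (mergeAt j L) (1 : R) else 0)
  | [] => by simp [dList]
  | [a] => by simp [dList]
  | a :: b :: t => by
    rw [show dList R m (a :: b :: t) =
        (if a + b < m then -Finsupp.single ((a + b) :: t) (1 : R) else 0)
          - Finsupp.mapDomain (List.cons a) (dList R m (b :: t)) from rfl]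
    rw [dList_eq R m (b :: t)]
    rw [show (a :: b :: t).length - 1 = t.length + 1 by simp]
    rw [Finset.sum_range_succ']
    have h0 : (-1 : R) ^ (0 + 1) •
        (if (a :: b :: t).getD 0 0 + (a :: b :: t).getD (0 + 1) 0 < m then
          Finsupp.single (mergeAt 0 (a :: b :: t)) (1 : R) else 0)
        = if a + b < m then -Finsupp.single ((a + b) :: t) (1 : R) else 0 := by
      rw [mergeAt_zero]
      simp only [List.getD_cons_zero, List.getD_cons_succ, pow_one, neg_smul, one_smul]
      split_ifs <;> simp
    rw [h0]
    rw [Finsupp.mapDomain_finset_sum]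
    rw [sub_eq_add_neg, add_comm, ← Finset.sum_neg_distrib]
    congr 1
    apply Finset.sum_congr rfl
    intro j _
    rw [Finsupp.mapDomain_smul, show (List.cons b t).length - 1 = t.length from rfl] at *
    rw [show ∀ v : List ℕ →₀ R, -((-1:R)^(j+1) • v) = (-1:R)^(j+1+1) • v from fun v => by
      rw [show ((-1:R)^(j+1+1)) = -(-1:R)^(j+1) by ring, neg_smul]]
    congr 1
    simp only [List.getD_cons_succ, mergeAt_succ]
    split_ifs with h
    · rw [Finsupp.mapDomain_single]
    · rw [Finsupp.mapDomain_zero]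

lemma rL_single (R : Type) [CommRing R] (ℓ : ℤ) (m k : ℕ) (M : List ℕ) :
    rL R ℓ m k (Finsupp.single M (1 : R)) =
      if h : (M.length = k ∧ (M.sum : ℤ) = ℓ ∧ ∀ y ∈ M, 1 ≤ y ∧ y < m) then
        Finsupp.single (⟨M, h⟩ : OPb ℓ m k) 1 else 0 := by
  ext b
  have hb : rL R ℓ m k (Finsupp.single M (1 : R)) b = Finsupp.single M (1 : R) b.1 := by
    simp [rL, Finsupp.lcomapDomain, Finsupp.comapDomain_apply]
    rfl
  rw [hb]
  split_ifs with h
  · rw [Finsupp.single_apply]; erw [Finsupp.single_apply]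
    by_cases he : M = b.1
    · erw [if_pos he, if_pos (Subtype.ext he)]
    · erw [if_neg he, if_neg (fun hc => he (congrArg Subtype.val hc))]
  · have : b.1 ≠ M := fun he => h (he ▸ b.2)
    rw [Finsupp.single_eq_of_ne' (Ne.symm this)]
    rfl
section Aux8
variable {m : ℕ} [NeZero m]

lemma toListF_bounds {k ℓ : ℕ} (f : Fin (k + 1) → ZMod m) (hf : MCValid (Zc m) k ℓ f) :
    ∀ y ∈ toListF f, 1 ≤ y ∧ y < m := by
  intro y hy
  obtain ⟨i, rfl⟩ := mem_toListF hy
  refine ⟨?_, ZMod.val_lt _⟩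
  have h0 := (hf.1 i).1
  rw [Zc_edist_eq] at h0
  have hne : (f i.succ - f i.castSucc).val ≠ 0 := by exact_mod_cast h0
  omega

lemma main_term_eq (R : Type) [CommRing R] (hm : 2 ≤ m) (x : ZMod m) (ℓ k : ℕ)
    (b : RCb (Zc m) (fun _ f => f 0 = x) (k + 1) ℓ) (j : Fin k) :
    (Finsupp.domLCongr (eqvZ m x ℓ k) : _ ≃ₗ[R] _).toLinearMap
      (if h : MCValid (Zc m) k ℓ (delMid b.1 j) ∧ (fun _ f => f 0 = x) k (delMid b.1 j) then
        Finsupp.single (⟨delMid b.1 j, h⟩ : RCb (Zc m) (fun _ f => f 0 = x) k ℓ) (1 : R) else 0)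
    = rL R (ℓ : ℤ) m k
        (if (toListF b.1).getD j 0 + (toListF b.1).getD (j + 1) 0 < m then
          Finsupp.single (mergeAt j (toListF b.1)) (1 : R) else 0) := by
  set L := toListF b.1 with hLdef
  have hlen : L.length = k + 1 := toListF_length b.1
  have hmem : ∀ y ∈ L, 1 ≤ y ∧ y < m := toListF_bounds b.1 b.2.1
  have hsum : L.sum = ℓ := tlen_toListF b.1 b.2.1.2
  have hjl : (j : ℕ) + 1 < L.length := by have := j.2; omega
  have hb1 : b.1 = vtx m x L (k + 1) := by
    have h1 : vtx m (b.1 0) (toListF b.1) (k + 1) = b.1 := vtx_toListF b.1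
    rw [b.2.2] at h1
    exact h1.symm
  have hdel : delMid b.1 j = vtx m x (mergeAt j L) k := by
    rw [hb1]
    exact delMid_vtx x L k hlen j
  have hcond : MCValid (Zc m) k ℓ (delMid b.1 j) ↔ L.getD j 0 + L.getD (j + 1) 0 < m := by
    rw [hdel]
    exact mcvalid_mergeAt x L k ℓ hlen hmem hsum j j.2
  have hP : delMid b.1 j 0 = x := by
    rw [hdel]
    simp [vtx]
  by_cases hc : L.getD j 0 + L.getD (j + 1) 0 < m
  · have hv : MCValid (Zc m) k ℓ (delMid b.1 j) ∧ (fun _ f => f 0 = x) k (delMid b.1 j) :=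
      ⟨hcond.mpr hc, hP⟩
    rw [dif_pos hv, if_pos hc, rL_single]
    have hmemM : ∀ e ∈ mergeAt (j : ℕ) L, 1 ≤ e ∧ e < m := by
      intro e he
      rcases mem_mergeAt he with h | rfl
      · exact hmem e h
      · constructor
        · have := (hmem _ (List.getD_eq_getElem L 0 (show (j:ℕ) < L.length by omega) ▸
            List.getElem_mem _)).1
          omega
        · exact hc
    have hMlen : (mergeAt (j : ℕ) L).length = k := by rw [mergeAt_length _ _ hjl]; omega
    have hMsum : (mergeAt (j : ℕ) L).sum = ℓ := by
      rw [mergeAt_sum _ _ hjl, ← list_split_sum L j hjl, hsum]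
    have hval : (mergeAt (j : ℕ) L).length = k ∧ ((mergeAt (j : ℕ) L).sum : ℤ) = (ℓ : ℤ) ∧
        ∀ y ∈ mergeAt (j : ℕ) L, 1 ≤ y ∧ y < m := ⟨hMlen, by exact_mod_cast hMsum, hmemM⟩
    rw [dif_pos hval]
    have hkey : eqvZ m x ℓ k ⟨delMid b.1 j, hv⟩ = (⟨mergeAt (j : ℕ) L, hval⟩ : OPb (ℓ : ℤ) m k) := by
      apply Subtype.ext
      show toListF (delMid b.1 j) = mergeAt (j : ℕ) L
      rw [hdel]
      exact toListF_vtx x _ hMlen fun e he => (hmemM e he).2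
    have h2 : (Finsupp.domLCongr (eqvZ m x ℓ k) : _ ≃ₗ[R] _).toLinearMap
        (Finsupp.single (⟨delMid b.1 j, hv⟩ : RCb (Zc m) (fun _ f => f 0 = x) k ℓ) (1 : R))
        = Finsupp.single ((eqvZ m x ℓ k) ⟨delMid b.1 j, hv⟩) (1 : R) :=
      Finsupp.equivMapDomain_single _ _ _
    rw [h2, hkey]
    rfl
  · rw [dif_neg (fun hv => hc (hcond.mp hv.1)), if_neg hc]
    simp
end Aux8
theorem Zc_MC_iso_OP' (R : Type) [CommRing R] (m : ℕ) (hm : 2 ≤ m) (x : ZMod m) (ℓ : ℕ) :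
    ∃ e : ∀ k, RMod R (Zc m) (fun _ f => f 0 = x) k ℓ →ₗ[R] OPMod R (ℓ : ℤ) m k,
      (∀ k, Function.Bijective (e k)) ∧
      (∀ k (b : RCb (Zc m) (fun _ f => f 0 = x) k ℓ),
        eL R (ℓ : ℤ) m k (e k (Finsupp.single b 1)) =
          Finsupp.single
            (List.ofFn fun i : Fin k =>
              ((Zc m).edist (b.1 i.castSucc) (b.1 i.succ)).toNat) 1) ∧
      (∀ k (c : RMod R (Zc m) (fun _ f => f 0 = x) (k + 1) ℓ),
        e k (dR R (Zc m) (fun _ f => f 0 = x) k ℓ c) = dOP R (ℓ : ℤ) m k (e (k + 1) c)) := by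
  haveI : NeZero m := ⟨by omega⟩
  refine ⟨fun k => (Finsupp.domLCongr (eqvZ m x ℓ k) : _ ≃ₗ[R] _).toLinearMap,
    fun k => (Finsupp.domLCongr (eqvZ m x ℓ k) : _ ≃ₗ[R] _).bijective, ?_, ?_⟩
  · intro k b
    show eL R (ℓ : ℤ) m k ((Finsupp.domLCongr (eqvZ m x ℓ k) : _ ≃ₗ[R] _).toLinearMap
      (Finsupp.single b (1 : R))) = _
    have h1 : (Finsupp.domLCongr (eqvZ m x ℓ k) : _ ≃ₗ[R] _).toLinearMap (Finsupp.single b (1 : R))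
        = Finsupp.single (eqvZ m x ℓ k b) (1 : R) := Finsupp.equivMapDomain_single _ _ _
    rw [h1, eL]
    erw [Finsupp.lmapDomain_apply, Finsupp.mapDomain_single]
    congr 1
    show toListF b.1 = _
    unfold toListF
    congr 1
    funext i
    rw [Zc_edist_eq]
    simp
  · intro k c
    induction c using Finsupp.induction_linear with
    | zero => simp
    | add f g hf hg => simp [map_add, hf, hg]
    | single b r =>
      have hL : (toListF b.1).length = k + 1 := toListF_length b.1
      show (Finsupp.domLCongr (eqvZ m x ℓ k) : _ ≃ₗ[R] _).toLinearMap
        (dR R (Zc m) (fun _ f => f 0 = x) k ℓ (Finsupp.single b r))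
        = dOP R (ℓ : ℤ) m k ((Finsupp.domLCongr (eqvZ m x ℓ (k + 1)) : _ ≃ₗ[R] _).toLinearMap
          (Finsupp.single b r))
      rw [dR, Finsupp.lsum_single, LinearMap.toSpanSingleton_apply, map_smul]
      erw [map_sum]
      have h1 : (Finsupp.domLCongr (eqvZ m x ℓ (k + 1)) : _ ≃ₗ[R] _).toLinearMap
          (Finsupp.single b r) = Finsupp.single (eqvZ m x ℓ (k + 1) b) r :=
        Finsupp.equivMapDomain_single _ _ _
      rw [h1, dOP, LinearMap.comp_apply, LinearMap.comp_apply]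
      rw [show eL R (ℓ : ℤ) m (k + 1) (Finsupp.single (eqvZ m x ℓ (k + 1) b) r)
          = Finsupp.single (toListF b.1) r from
        (Finsupp.mapDomain_single : _)]
      rw [DL, Finsupp.lsum_single, LinearMap.toSpanSingleton_apply]
      rw [dList_eq R m (toListF b.1), map_smul, map_sum]
      rw [show (toListF b.1).length - 1 = k by omega]
      congr 1
      rw [← Fin.sum_univ_eq_sum_range]
      apply Finset.sum_congr rfl
      intro j _
      erw [map_smul, map_smul]
      congr 1
      convert main_term_eq R hm x ℓ k b j using 2
      by_cases h : MCValid (Zc m) k ℓ (delMid b.1 j) ∧ delMid b.1 j 0 = x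
      · rw [dif_pos h, dif_pos h]
        rfl
      · rw [dif_neg h, dif_neg h]
        rfl
/-- for `m ≥ 2`, the subcomplex `MC_*(x,ℓ)` of the magnitude chains of
`Z_m` spanned by tuples starting at `x` of length `ℓ` is isomorphic as a chain complex
to `OP_*(ℓ,m)`, via `(x, x₁, ..., x_k) ↦ (d(x,x₁), d(x₁,x₂), ..., d(x_{k-1},x_k))`. -/
theorem Zc_MC_iso_OP (R : Type) [CommRing R] (m : ℕ) (hm : 2 ≤ m) (x : ZMod m) (ℓ : ℕ) :
    ∃ e : ∀ k, RMod R (Zc m) (fun _ f => f 0 = x) k ℓ →ₗ[R] OPMod R (ℓ : ℤ) m k,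
      -- `e` is an isomorphism in each degree:
      (∀ k, Function.Bijective (e k)) ∧
      -- `e` sends a tuple to its list of consecutive distances:
      (∀ k (b : RCb (Zc m) (fun _ f => f 0 = x) k ℓ),
        eL R (ℓ : ℤ) m k (e k (Finsupp.single b 1)) =
          Finsupp.single
            (List.ofFn fun i : Fin k =>
              ((Zc m).edist (b.1 i.castSucc) (b.1 i.succ)).toNat) 1) ∧
      -- `e` is a chain map:
      (∀ k (c : RMod R (Zc m) (fun _ f => f 0 = x) (k + 1) ℓ),
        e k (dR R (Zc m) (fun _ f => f 0 = x) k ℓ c) = dOP R (ℓ : ℤ) m k (e (k + 1) c)) := by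
  exact Zc_MC_iso_OP' R m hm x ℓ
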